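/- arXiv:2512.08677 — 4 statements merged into one kernel-verified Lean document; each statement's English description precedes it below -/
import Mathlib

section
/- If f : X → X is a homeomorphism of a compact metric space and the induced map 2^f on the hyperspace of nonempty compact subsets has the L-shadowing property, then f has the L-shadowing property. -/
open Topology Filter Metric TopologicalSpace

namespace LS

variable {X Y : Type*} [MetricSpace X] [MetricSpace Y]

/-- finite forward iterates of a homeomorphism -/
def hpowAux (f : X ≃ₜ X) : ℕ → X ≃ₜ X
  | 0 => Homeomorph.refl X
  | n+1 => (hpowAux f n).trans f

/-- `ℤ`-iterates of a homeomorphism: `hpow f k` is the `k`-th iterate `f^k`. -/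
def hpow (f : X ≃ₜ X) : ℤ → X ≃ₜ X
  | Int.ofNat n => hpowAux f n
  | Int.negSucc n => (hpowAux f (n+1)).symm

/-- the `ℤ`-iteration map of `f` -/
def F (f : X ≃ₜ X) : ℤ → X → X := fun k => hpow f k

/-- δ-limit-pseudo-orbit for a system given by its iterate family `T` -/
def IsLimitPseudoOrbit (T : ℤ → Y → Y) (δ : ℝ) (x : ℤ → Y) : Prop :=
  (∀ k : ℤ, dist (T 1 (x k)) (x (k+1)) ≤ δ) ∧
  Tendsto (fun k : ℤ => dist (T 1 (x k)) (x (k+1))) (cocompact ℤ) (𝓝 0)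

/-- `z` ε-limit-shadows the sequence `x` -/
def LimitShadows (T : ℤ → Y → Y) (ε : ℝ) (x : ℤ → Y) (z : Y) : Prop :=
  (∀ k : ℤ, dist (T k z) (x k) ≤ ε) ∧
  Tendsto (fun k : ℤ => dist (T k z) (x k)) (cocompact ℤ) (𝓝 0)

/-- the L-shadowing property -/
def LShadowing (T : ℤ → Y → Y) : Prop :=
  ∀ ε > (0:ℝ), ∃ δ > (0:ℝ), ∀ x : ℤ → Y, IsLimitPseudoOrbit T δ x → ∃ z, LimitShadows T ε x z

/-- the shadowing property -/
def Shadowing (T : ℤ → Y → Y) : Prop :=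
  ∀ ε > (0:ℝ), ∃ δ > (0:ℝ), ∀ x : ℤ → Y,
    (∀ k : ℤ, dist (T 1 (x k)) (x (k+1)) < δ) → ∃ z, ∀ k : ℤ, dist (T k z) (x k) < ε

/-- local c-stable set -/
def Ws (f : X ≃ₜ X) (c : ℝ) (x : X) : Set X :=
  {y | ∀ k : ℤ, 0 ≤ k → dist (F f k y) (F f k x) ≤ c}

/-- local c-unstable set -/
def Wu (f : X ≃ₜ X) (c : ℝ) (x : X) : Set X :=
  {y | ∀ k : ℤ, k ≤ 0 → dist (F f k y) (F f k x) ≤ c}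

/-- stable set -/
def WsA (f : X ≃ₜ X) (x : X) : Set X :=
  {y | Tendsto (fun k : ℤ => dist (F f k y) (F f k x)) atTop (𝓝 0)}

/-- unstable set -/
def WuA (f : X ≃ₜ X) (x : X) : Set X :=
  {y | Tendsto (fun k : ℤ => dist (F f k y) (F f k x)) atBot (𝓝 0)}

/-- asymptotic local stable set -/
def Vs (f : X ≃ₜ X) (c : ℝ) (x : X) : Set X := WsA f x ∩ Ws f c x

/-- asymptotic local unstable set -/
def Vu (f : X ≃ₜ X) (c : ℝ) (x : X) : Set X := WuA f x ∩ Wu f c x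

/-- image of a nonempty compact set under a homeomorphism -/
def himg (f : X ≃ₜ X) (A : NonemptyCompacts X) : NonemptyCompacts X :=
  ⟨⟨f '' A, A.isCompact.image f.continuous⟩, A.nonempty.image f⟩

/-- the `ℤ`-iteration family of the induced hyperspace map `2^f` -/
def HF (f : X ≃ₜ X) : ℤ → NonemptyCompacts X → NonemptyCompacts X :=
  fun k A => himg (hpow f k) A

end LS


namespace LS

/-- singleton as a nonempty compact set -/
def S {X : Type*} [MetricSpace X] (x : X) : NonemptyCompacts X :=
  ⟨⟨{x}, isCompact_singleton⟩, Set.singleton_nonempty x⟩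

theorem dist_S {X : Type*} [MetricSpace X] (a b : X) : dist (S a) (S b) = dist a b := by
  rw [NonemptyCompacts.dist_eq]
  apply le_antisymm
  · apply hausdorffDist_le_of_mem_dist dist_nonneg
    · intro x hx; rw [Set.eq_of_mem_singleton hx]; exact ⟨b, rfl, le_rfl⟩
    · intro x hx; rw [Set.eq_of_mem_singleton hx]
      exact ⟨a, rfl, (dist_comm b a).le⟩
  · have := infDist_le_hausdorffDist_of_mem (x := a) (s := ({a} : Set X)) (t := {b}) rfl
      (hausdorffEdist_ne_top_of_nonempty_of_bounded (Set.singleton_nonempty a)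
        (Set.singleton_nonempty b) Bornology.isBounded_singleton Bornology.isBounded_singleton)
    rw [infDist_singleton] at this; exact this

theorem mem_dist_le {X : Type*} [MetricSpace X] (A : NonemptyCompacts X) (z : X)
    (hz : z ∈ (A : Set X)) (p : X) : dist z p ≤ dist A (S p) := by
  rw [NonemptyCompacts.dist_eq]
  have := infDist_le_hausdorffDist_of_mem (x := z) (t := ({p} : Set X)) hz
    (hausdorffEdist_ne_top_of_nonempty_of_bounded A.nonempty (Set.singleton_nonempty p)
      A.isCompact.isBounded Bornology.isBounded_singleton)
  rw [infDist_singleton] at this; exact this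

theorem himg_S {X : Type*} [MetricSpace X] (g : X ≃ₜ X) (x : X) : himg g (S x) = S (g x) := by
  apply NonemptyCompacts.ext
  simp [himg, S]

theorem HF_S {X : Type*} [MetricSpace X] (f : X ≃ₜ X) (k : ℤ) (x : X) :
    HF f k (S x) = S (F f k x) := himg_S _ _

theorem dist_HF_S {X : Type*} [MetricSpace X] (f : X ≃ₜ X) (k : ℤ) (x y : X) :
    dist (HF f k (S x)) (S y) = dist (F f k x) y := by rw [HF_S, dist_S]

end LS

/-- if the induced hyperspace map `2^f` has the L-shadowing property,
then `f` has the L-shadowing property. -/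
theorem stmt_0 {X : Type*} [MetricSpace X] [CompactSpace X] (f : X ≃ₜ X)
    (h : LS.LShadowing (LS.HF f)) : LS.LShadowing (LS.F f) := by
  intro eps heps
  obtain ⟨δ, hδ, hsh⟩ := h eps heps
  refine ⟨δ, hδ, ?_⟩
  intro x hx
  set A : ℤ → NonemptyCompacts X := fun k => LS.S (x k) with hA
  have hAdist : ∀ k : ℤ, dist (LS.HF f 1 (A k)) (A (k+1)) = dist (LS.F f 1 (x k)) (x (k+1)) :=
    fun k => LS.dist_HF_S f 1 (x k) (x (k+1))
  have hpo : LS.IsLimitPseudoOrbit (LS.HF f) δ A := by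
    constructor
    · intro k; rw [hAdist k]; exact hx.1 k
    · have := hx.2
      apply this.congr
      intro k
      exact (hAdist k).symm
  obtain ⟨Z, hZ1, hZ2⟩ := hsh A hpo
  obtain ⟨z, hz⟩ := Z.nonempty
  have hmem : ∀ k : ℤ, LS.F f k z ∈ ((LS.HF f k Z : NonemptyCompacts X) : Set X) := by
    intro k
    exact ⟨z, hz, rfl⟩
  have hbd : ∀ k : ℤ, dist (LS.F f k z) (x k) ≤ dist (LS.HF f k Z) (A k) := by
    intro k
    exact LS.mem_dist_le (LS.HF f k Z) (LS.F f k z) (hmem k) (x k)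
  refine ⟨z, ?_, ?_⟩
  · intro k
    exact (hbd k).trans (hZ1 k)
  · exact squeeze_zero (fun k => dist_nonneg) hbd hZ2
end

section
/- If f : X → X is a homeomorphism of a compact metric space with the L-shadowing property, then the induced map 2^f on the hyperspace of nonempty compact subsets (with the Hausdorff metric) has the L-shadowing property. -/
open Topology Filter Metric TopologicalSpace

set_option linter.unusedSectionVars false
set_option maxHeartbeats 1000000


section C1
open LS
variable {X : Type*} [MetricSpace X] (f : X ≃ₜ X)
lemma hpowAux_comm (n : ℕ) (x : X) :
    f (LS.hpowAux f n x) = LS.hpowAux f n (f x) := by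
  induction n generalizing x with
  | zero => rfl
  | succ n ih =>
      show f ((LS.hpowAux f n).trans f x) = (LS.hpowAux f n).trans f (f x)
      simp only [Homeomorph.trans_apply]
      rw [ih]
lemma hpowAux_trans_comm (n : ℕ) :
    (LS.hpowAux f n).trans f = f.trans (LS.hpowAux f n) := by
  ext x
  simp only [Homeomorph.trans_apply]
  exact hpowAux_comm f n x
lemma F_zero (x : X) : F f 0 x = x := rfl
lemma F_one (x : X) : F f 1 x = f x := rfl
lemma F_succ (k : ℤ) (x : X) : F f (k+1) x = f (F f k x) := by
  cases k with
  | ofNat n =>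
      show (LS.hpowAux f n).trans f x = f (LS.hpowAux f n x)
      simp only [Homeomorph.trans_apply]
  | negSucc n =>
      cases n with
      | zero =>
          show x = f ((LS.hpowAux f 1).symm x)
          have : LS.hpowAux f 1 = (Homeomorph.refl X).trans f := rfl
          rw [this]; simp
      | succ m =>
          show (LS.hpowAux f (m+1)).symm x = f ((LS.hpowAux f (m+2)).symm x)
          have h2 : LS.hpowAux f (m+2) = f.trans (LS.hpowAux f (m+1)) := by
            have : LS.hpowAux f (m+2) = (LS.hpowAux f (m+1)).trans f := rfl
            rw [this, hpowAux_trans_comm]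
          rw [h2]; simp
lemma F_cont (k : ℤ) : Continuous (F f k) := (hpow f k).continuous
end C1

section C2
open Filter Metric
lemma int_mem_cocompact' {s : Set ℤ} (M : ℕ) (hs : ∀ j : ℤ, (M:ℤ) ≤ |j| → j ∈ s) :
    s ∈ cocompact ℤ := by
  rw [cocompact_eq_atBot_atTop, mem_sup]
  constructor
  · refine mem_atBot_sets.2 ⟨-(M:ℤ), fun b hb => hs b ?_⟩
    rw [Int.abs_eq_natAbs]; omega
  · refine mem_atTop_sets.2 ⟨(M:ℤ), fun b hb => hs b ?_⟩
    rw [Int.abs_eq_natAbs]; omega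
lemma int_tail_of_cocompact {s : Set ℤ} (hs : s ∈ cocompact ℤ) :
    ∃ M : ℕ, ∀ j : ℤ, (M:ℤ) ≤ |j| → j ∈ s := by
  rw [cocompact_eq_atBot_atTop, mem_sup] at hs
  obtain ⟨a, ha⟩ := mem_atBot_sets.1 hs.1
  obtain ⟨b, hb⟩ := mem_atTop_sets.1 hs.2
  refine ⟨(max (a.natAbs + 1) (b.natAbs + 1)), fun j hj => ?_⟩
  rw [Int.abs_eq_natAbs] at hj
  rcases le_or_gt j a with h | h
  · exact ha j h
  · refine hb j ?_; omega
lemma tendsto_zero_of_tail {g : ℤ → ℝ} (h0 : ∀ j, 0 ≤ g j)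
    (H : ∀ c : ℝ, 0 < c → ∃ M : ℕ, ∀ j : ℤ, (M:ℤ) ≤ |j| → g j ≤ c) :
    Tendsto g (cocompact ℤ) (𝓝 0) := by
  rw [Metric.tendsto_nhds]
  intro c hc
  obtain ⟨M, hM⟩ := H (c/2) (by linarith)
  refine Filter.mem_of_superset (int_mem_cocompact' M (fun j hj => hj)) ?_
  intro j hj
  simp only [Set.mem_setOf_eq, Real.dist_eq, sub_zero]
  rw [abs_of_nonneg (h0 j)]
  exact lt_of_le_of_lt (hM j hj) (by linarith)
lemma tail_of_tendsto_zero {g : ℤ → ℝ} (hg : Tendsto g (cocompact ℤ) (𝓝 0))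
    (c : ℝ) (hc : 0 < c) : ∃ M : ℕ, ∀ j : ℤ, (M:ℤ) ≤ |j| → g j ≤ c := by
  obtain ⟨M, hM⟩ := int_tail_of_cocompact (Metric.tendsto_nhds.1 hg c hc)
  refine ⟨M, fun j hj => ?_⟩
  have := hM j hj
  simp only [Set.mem_setOf_eq, Real.dist_eq, sub_zero] at this
  exact le_of_lt (lt_of_le_of_lt (le_abs_self _) this)
lemma tendsto_atTop_of_cocompact {g : ℤ → ℝ} {l : Filter ℝ} (hg : Tendsto g (cocompact ℤ) l) :
    Tendsto g atTop l :=
  hg.mono_left (by rw [cocompact_eq_atBot_atTop]; exact le_sup_right)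
lemma tendsto_atBot_of_cocompact {g : ℤ → ℝ} {l : Filter ℝ} (hg : Tendsto g (cocompact ℤ) l) :
    Tendsto g atBot l :=
  hg.mono_left (by rw [cocompact_eq_atBot_atTop]; exact le_sup_left)
lemma tail_of_tendsto_zero_atTop {g : ℤ → ℝ} (hg : Tendsto g atTop (𝓝 0))
    (c : ℝ) (hc : 0 < c) : ∃ M : ℤ, ∀ j : ℤ, M ≤ j → g j ≤ c := by
  have := (Metric.tendsto_nhds.1 hg c hc)
  rw [eventually_atTop] at this
  obtain ⟨M, hM⟩ := this
  refine ⟨M, fun j hj => ?_⟩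
  have := hM j hj
  rw [Real.dist_eq, sub_zero] at this
  exact le_of_lt (lt_of_le_of_lt (le_abs_self _) this)
lemma tail_of_tendsto_zero_atBot {g : ℤ → ℝ} (hg : Tendsto g atBot (𝓝 0))
    (c : ℝ) (hc : 0 < c) : ∃ M : ℤ, ∀ j : ℤ, j ≤ M → g j ≤ c := by
  have := (Metric.tendsto_nhds.1 hg c hc)
  rw [eventually_atBot] at this
  obtain ⟨M, hM⟩ := this
  refine ⟨M, fun j hj => ?_⟩
  have := hM j hj
  rw [Real.dist_eq, sub_zero] at this
  exact le_of_lt (lt_of_le_of_lt (le_abs_self _) this)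
end C2

section C3
open LS Filter Metric
variable {X : Type*} [MetricSpace X] (f : X ≃ₜ X)

lemma orbit_step (w : X) (k : ℤ) : dist (F f 1 (F f k w)) (F f (k+1) w) = 0 := by
  rw [F_one, ← F_succ, dist_self]

/-- forward tail shadowing -/
lemma tail_fwd {c b : ℝ} (hc0 : 0 ≤ c)
    (hsh : ∀ x, IsLimitPseudoOrbit (F f) c x → ∃ z, LimitShadows (F f) b x z)
    (x : ℤ → X) (M : ℤ)
    (herr : ∀ j : ℤ, M ≤ j → dist (f (x j)) (x (j+1)) ≤ c)
    (htend : Tendsto (fun j : ℤ => dist (f (x j)) (x (j+1))) (cocompact ℤ) (𝓝 0)) :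
    ∃ w : X, (∀ j : ℤ, M ≤ j → dist (F f j w) (x j) ≤ b) ∧
      Tendsto (fun j : ℤ => dist (F f j w) (x j)) atTop (𝓝 0) := by
  set v : ℤ → X := fun j => if j < M then F f (j - M) (x M) else x j with hv
  have hv_eq : ∀ j, M ≤ j → v j = x j := by
    intro j hj; simp only [hv, if_neg (not_lt.2 hj)]
  have hv0 : ∀ k : ℤ, k < M → dist (F f 1 (v k)) (v (k+1)) = 0 := by
    intro k hk
    have hvk : v k = F f (k - M) (x M) := by simp only [hv, if_pos hk]
    have h1 : F f 1 (v k) = F f (k - M + 1) (x M) := by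
      rw [hvk, F_one, ← F_succ]
    rcases lt_or_ge (k+1) M with h | h
    · have hvk1 : v (k+1) = F f (k + 1 - M) (x M) := by simp only [hv, if_pos h]
      rw [h1, hvk1, show k - M + 1 = k + 1 - M by ring, dist_self]
    · have hM : k + 1 = M := le_antisymm (Int.add_one_le_iff.2 hk) h
      have hvk1 : v (k+1) = x M := by rw [hv_eq (k+1) h, hM]
      rw [h1, hvk1, show k - M + 1 = 0 by omega, F_zero, dist_self]
  have hpo : IsLimitPseudoOrbit (F f) c v := by
    constructor
    · intro k
      rcases lt_or_ge k M with hk | hk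
      · rw [hv0 k hk]; exact hc0
      · rw [F_one, hv_eq k hk, hv_eq (k+1) (by omega)]; exact herr k hk
    · apply tendsto_zero_of_tail (fun j => dist_nonneg)
      intro c' hc'
      obtain ⟨M₁, hM₁⟩ := tail_of_tendsto_zero htend c' hc'
      refine ⟨M₁ + M.natAbs + 1, fun j hj => ?_⟩
      rcases lt_or_ge j M with h | h
      · rw [hv0 j h]; exact hc'.le
      · rw [F_one, hv_eq j h, hv_eq (j+1) (by omega)]
        refine hM₁ j ?_
        rw [Int.abs_eq_natAbs] at hj ⊢; omega
  obtain ⟨z, hz⟩ := hsh v hpo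
  refine ⟨z, fun j hj => ?_, ?_⟩
  · have := hz.1 j; rwa [hv_eq j hj] at this
  · have h1 := tendsto_atTop_of_cocompact hz.2
    refine h1.congr' ?_
    rw [EventuallyEq, eventually_atTop]
    exact ⟨M, fun j hj => by rw [hv_eq j hj]⟩

/-- backward tail shadowing -/
lemma tail_bwd {c b : ℝ} (hc0 : 0 ≤ c)
    (hsh : ∀ x, IsLimitPseudoOrbit (F f) c x → ∃ z, LimitShadows (F f) b x z)
    (x : ℤ → X) (M : ℤ)
    (herr : ∀ j : ℤ, j + 1 ≤ M → dist (f (x j)) (x (j+1)) ≤ c)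
    (htend : Tendsto (fun j : ℤ => dist (f (x j)) (x (j+1))) (cocompact ℤ) (𝓝 0)) :
    ∃ w : X, (∀ j : ℤ, j ≤ M → dist (F f j w) (x j) ≤ b) ∧
      Tendsto (fun j : ℤ => dist (F f j w) (x j)) atBot (𝓝 0) := by
  set v : ℤ → X := fun j => if M < j then F f (j - M) (x M) else x j with hv
  have hv_eq : ∀ j, j ≤ M → v j = x j := by
    intro j hj; simp only [hv, if_neg (not_lt.2 hj)]
  have hv0 : ∀ k : ℤ, M ≤ k → dist (F f 1 (v k)) (v (k+1)) = 0 := by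
    intro k hk
    have hvk1 : v (k+1) = F f (k + 1 - M) (x M) := by
      simp only [hv, if_pos (by omega : M < k + 1)]
    rcases lt_or_ge M k with h | h
    · have hvk : v k = F f (k - M) (x M) := by simp only [hv, if_pos h]
      rw [hvk, F_one, ← F_succ, hvk1, show k - M + 1 = k + 1 - M by ring, dist_self]
    · have hM : k = M := le_antisymm h hk
      have hvk : v k = x M := by rw [hv_eq k h, hM]
      rw [hvk, F_one, hvk1, show k + 1 - M = 1 by omega, F_one, dist_self]
  have hpo : IsLimitPseudoOrbit (F f) c v := by
    constructor
    · intro k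
      rcases lt_or_ge k M with hk | hk
      · rw [F_one, hv_eq k hk.le, hv_eq (k+1) (by omega)]; exact herr k (by omega)
      · rw [hv0 k hk]; exact hc0
    · apply tendsto_zero_of_tail (fun j => dist_nonneg)
      intro c' hc'
      obtain ⟨M₁, hM₁⟩ := tail_of_tendsto_zero htend c' hc'
      refine ⟨M₁ + M.natAbs + 1, fun j hj => ?_⟩
      rcases lt_or_ge j M with h | h
      · rw [F_one, hv_eq j h.le, hv_eq (j+1) (by omega)]
        refine hM₁ j ?_
        rw [Int.abs_eq_natAbs] at hj ⊢; omega
      · rw [hv0 j h]; exact hc'.le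
  obtain ⟨z, hz⟩ := hsh v hpo
  refine ⟨z, fun j hj => ?_, ?_⟩
  · have := hz.1 j; rwa [hv_eq j hj] at this
  · have h1 := tendsto_atBot_of_cocompact hz.2
    refine h1.congr' ?_
    rw [EventuallyEq, eventually_atBot]
    exact ⟨M, fun j hj => by rw [hv_eq j hj]⟩

/-- gluing two orbit tails onto a middle orbit and shadowing the result -/
lemma glue_shadow {c b : ℝ} (hc0 : 0 ≤ c)
    (hsh : ∀ x, IsLimitPseudoOrbit (F f) c x → ∃ z, LimitShadows (F f) b x z)
    (zm wm wp : X) (M : ℤ) (hM : 1 ≤ M)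
    (hL : dist (F f (-M) wm) (F f (-M) zm) ≤ c)
    (hR : dist (F f M zm) (F f M wp) ≤ c) :
    ∃ z, LimitShadows (F f) b
      (fun j : ℤ => if j ≤ -M - 1 then F f j wm else if j < M then F f j zm else F f j wp) z := by
  set u : ℤ → X :=
    fun j => if j ≤ -M - 1 then F f j wm else if j < M then F f j zm else F f j wp with hu
  have hum : ∀ j, j ≤ -M - 1 → u j = F f j wm := by
    intro j hj; simp only [hu, if_pos hj]
  have huz : ∀ j, -M ≤ j → j < M → u j = F f j zm := by
    intro j hj1 hj2; simp only [hu, if_neg (by omega : ¬ j ≤ -M - 1), if_pos hj2]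
  have hup : ∀ j, M ≤ j → u j = F f j wp := by
    intro j hj
    simp only [hu, if_neg (by omega : ¬ j ≤ -M - 1), if_neg (not_lt.2 hj)]
  have herr0 : ∀ k : ℤ, k ≤ -M - 2 ∨ (-M ≤ k ∧ k ≤ M - 2) ∨ M ≤ k →
      dist (F f 1 (u k)) (u (k+1)) = 0 := by
    intro k hk
    rcases hk with hk | ⟨hk1, hk2⟩ | hk
    · rw [hum k (by omega), hum (k+1) (by omega), orbit_step]
    · rw [huz k hk1 (by omega), huz (k+1) (by omega) (by omega), orbit_step]
    · rw [hup k hk, hup (k+1) (by omega), orbit_step]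
  have herrL : dist (F f 1 (u (-M-1))) (u (-M)) ≤ c := by
    rw [hum (-M-1) le_rfl, huz (-M) le_rfl (by omega), F_one, ← F_succ,
      show -M - 1 + 1 = -M by ring]
    exact hL
  have herrR : dist (F f 1 (u (M-1))) (u M) ≤ c := by
    rw [huz (M-1) (by omega) (by omega), hup M le_rfl, F_one, ← F_succ,
      show M - 1 + 1 = M by ring]
    exact hR
  apply hsh
  constructor
  · intro k
    rcases (by omega : k ≤ -M - 2 ∨ k = -M - 1 ∨ (-M ≤ k ∧ k ≤ M - 2) ∨ k = M - 1 ∨ M ≤ k)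
      with h | h | h | h | h
    · rw [herr0 k (Or.inl h)]; exact hc0
    · rw [h, show -M - 1 + 1 = -M by ring]; exact herrL
    · rw [herr0 k (Or.inr (Or.inl h))]; exact hc0
    · rw [h, show M - 1 + 1 = M by ring]; exact herrR
    · rw [herr0 k (Or.inr (Or.inr h))]; exact hc0
  · apply tendsto_zero_of_tail (fun j => dist_nonneg)
    intro c' hc'
    refine ⟨M.natAbs + 2, fun j hj => ?_⟩
    rw [Int.abs_eq_natAbs] at hj
    have : j ≤ -M - 2 ∨ M ≤ j := by omega
    rcases this with h | h
    · rw [herr0 j (Or.inl h)]; exact hc'.le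
    · rw [herr0 j (Or.inr (Or.inr h))]; exact hc'.le
end C3

section C4
open LS Filter Metric Set
variable {X : Type*} [MetricSpace X] [CompactSpace X] (f : X ≃ₜ X)

lemma halfpow (ε : ℝ) (m : ℕ) : ε/2^(m+1) + ε/2^(m+1) = ε/2^m := by
  have h : (2:ℝ)^m ≠ 0 := pow_ne_zero _ two_ne_zero
  rw [pow_succ]; field_simp; ring

lemma pw_anti {ε : ℝ} (hε : 0 ≤ ε) {i m : ℕ} (h : i ≤ m) : ε/2^m ≤ ε/2^i := by
  gcongr
  · exact one_le_two

/-- the inductive multi-site shadowing statement -/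
def Good (P : Set (ℤ → X)) (ε : ℝ) (n : ℕ) (S : ℕ → ℕ) : Prop :=
  ∀ x ∈ P, ∃ z : X,
    (∀ j : ℤ, dist (F f j z) (x j) ≤ ε/4 - ε/2^(n+3)) ∧
    (∀ i : ℕ, 1 ≤ i → i ≤ n → ∀ j : ℤ, (S i : ℤ) ≤ |j| →
        dist (F f j z) (x j) ≤ ε/2^(i+2) - ε/2^(n+3)) ∧
    Tendsto (fun j : ℤ => dist (F f j z) (x j)) (cocompact ℤ) (𝓝 0)

lemma Good_congr {P : Set (ℤ → X)} {ε : ℝ} {n : ℕ} {S S' : ℕ → ℕ}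
    (hG : Good f P ε n S) (hSS : ∀ i, 1 ≤ i → i ≤ n → S i = S' i) :
    Good f P ε n S' := by
  intro x hx
  obtain ⟨z, h1, h2, h3⟩ := hG x hx
  exact ⟨z, h1, fun i hi1 hi2 j hj => h2 i hi1 hi2 j (by rwa [hSS i hi1 hi2]), h3⟩

section GoodSec
variable {ε : ℝ} (D : ℝ → ℝ)
  (hD : ∀ b : ℝ, 0 < b → 0 < D b ∧
    ∀ x, IsLimitPseudoOrbit (F f) (D b) x → ∃ z, LimitShadows (F f) b x z)
  {e : ℤ → ℝ} (hee : Tendsto e (cocompact ℤ) (𝓝 0))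
  {P : Set (ℤ → X)}
  (hPerr : ∀ x ∈ P, ∀ j : ℤ, dist (f (x j)) (x (j+1)) ≤ e j)

include hD hee hPerr

lemma good_zero (hε : 0 < ε) (heδ : ∀ j, e j ≤ D (ε/8)) (S : ℕ → ℕ) :
    Good f P ε 0 S := by
  intro x hx
  have h8 : 0 < ε/8 := by linarith
  have hpo : IsLimitPseudoOrbit (F f) (D (ε/8)) x := by
    constructor
    · intro k
      rw [F_one]
      exact le_trans (hPerr x hx k) (heδ k)
    · apply squeeze_zero (fun j => dist_nonneg) (fun j => ?_) hee
      rw [F_one]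
      exact hPerr x hx _
  obtain ⟨z, hz1, hz2⟩ := (hD (ε/8) h8).2 x hpo
  refine ⟨z, fun j => ?_, fun i hi1 hi2 j hj => by omega, hz2⟩
  have : ε/4 - ε/2^(0+3) = ε/8 := by norm_num; ring
  rw [this]
  exact hz1 j

lemma good_step (hε : 0 < ε) (hPc : IsCompact P) (n : ℕ) (S : ℕ → ℕ)
    (hGood : Good f P ε n S) :
    ∃ m : ℕ, Good f P ε (n+1) (Function.update S (n+1) m) := by
  classical
  set γ : ℝ := ε/2^(n+5) with hγdef
  have hγ : 0 < γ := by positivity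
  set c : ℝ := D γ with hcdef
  have hc : 0 < c := (hD γ hγ).1
  have hshγ := (hD γ hγ).2
  set α : ℝ := min γ (c/4) with hαdef
  have hα : 0 < α := lt_min hγ (by linarith)
  have hαγ : α ≤ γ := min_le_left _ _
  have hαc : α ≤ c/4 := min_le_right _ _
  set cα : ℝ := D α with hcαdef
  have hcα : 0 < cα := (hD α hα).1
  have hshα := (hD α hα).2
  set σ : ℝ := min γ (c/4) with hσdef
  have hσ : 0 < σ := lt_min hγ (by linarith)
  have hσγ : σ ≤ γ := min_le_left _ _
  have hσc : σ ≤ c/4 := min_le_right _ _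
  -- choose a stage-n shadow for each point of P
  choose zf hz1 hz2 hz3 using fun q : ↥P => hGood q.1 q.2
  -- tail control for the error envelope e
  obtain ⟨M₂, hM₂⟩ := tail_of_tendsto_zero hee (min cα (c/4)) (lt_min hcα (by linarith))
  -- tail control for each chosen shadow
  have hMq : ∀ q : ↥P, ∃ M : ℕ, ∀ j : ℤ, (M:ℤ) ≤ |j| →
      dist (F f j (zf q)) (q.1 j) ≤ c/4 :=
    fun q => tail_of_tendsto_zero (hz3 q) (c/4) (by linarith)
  choose M₁ hM₁ using hMq
  set Mx : ↥P → ℕ := fun q => M₁ q + M₂ + 1 with hMxdef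
  have hMx1 : ∀ q : ↥P, ∀ j : ℤ, ((Mx q : ℕ):ℤ) ≤ |j| →
      dist (F f j (zf q)) (q.1 j) ≤ c/4 := by
    intro q j hj
    refine hM₁ q j (le_trans ?_ hj)
    simp only [hMxdef]; push_cast; omega
  have hMx2 : ∀ q : ↥P, ∀ j : ℤ, ((Mx q : ℕ):ℤ) ≤ |j| → e j ≤ min cα (c/4) := by
    intro q j hj
    refine hM₂ j (le_trans ?_ hj)
    simp only [hMxdef]; push_cast; omega
  -- neighbourhoods
  set U : ↥P → Set (ℤ → X) := fun q =>
    {y : ℤ → X | ∀ j : ℤ, |j| ≤ ((Mx q : ℕ):ℤ) → dist (y j) (q.1 j) < σ} with hUdef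
  have hUopen : ∀ q, IsOpen (U q) := by
    intro q
    have hU : U q = Set.pi (↑(Finset.Icc (-((Mx q : ℕ):ℤ)) ((Mx q : ℕ):ℤ)) : Set ℤ)
        (fun j => Metric.ball (q.1 j) σ) := by
      ext y
      simp only [Set.mem_pi, Finset.coe_Icc, Set.mem_Icc, mem_ball, hUdef, Set.mem_setOf_eq]
      constructor
      · intro hyp j hj
        exact hyp j (abs_le.2 hj)
      · intro hyp j hj
        exact hyp j (abs_le.1 hj)
    rw [hU]
    exact isOpen_set_pi (Finset.finite_toSet _) (fun j _ => isOpen_ball)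
  have hUcover : P ⊆ ⋃ q : ↥P, U q := by
    intro y hy
    refine Set.mem_iUnion.2 ⟨⟨y, hy⟩, ?_⟩
    intro j hj
    rw [dist_self]; exact hσ
  obtain ⟨t, ht⟩ := hPc.elim_finite_subcover U hUopen hUcover
  refine ⟨t.sup Mx + 1, ?_⟩
  intro x' hx'
  obtain ⟨q, hqt, hq⟩ := Set.mem_iUnion₂.1 (ht hx')
  set M : ℤ := ((Mx q : ℕ):ℤ) with hMdef
  have hM1 : 1 ≤ M := by simp only [hMdef, hMxdef]; push_cast; omega
  have hMM₂ : (M₂:ℤ) ≤ M := by simp only [hMdef, hMxdef]; push_cast; omega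
  have hqx : ∀ j : ℤ, |j| ≤ M → dist (x' j) (q.1 j) < σ := hq
  -- error bounds for x'
  have herr' : ∀ j : ℤ, dist (f (x' j)) (x' (j+1)) ≤ e j := hPerr x' hx'
  have htend' : Tendsto (fun j : ℤ => dist (f (x' j)) (x' (j+1))) (cocompact ℤ) (𝓝 0) :=
    squeeze_zero (fun j => dist_nonneg) herr' hee
  -- forward tail shadow
  obtain ⟨wp, hwp1, hwp2⟩ := tail_fwd f hcα.le hshα x' M
    (fun j hj => le_trans (herr' j) (le_trans
      (hM₂ j (by rw [Int.abs_eq_natAbs] at *; omega)) (min_le_left _ _))) htend'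
  -- backward tail shadow
  obtain ⟨wm, hwm1, hwm2⟩ := tail_bwd f hcα.le hshα x' (-M)
    (fun j hj => le_trans (herr' j) (le_trans
      (hM₂ j (by rw [Int.abs_eq_natAbs] at *; omega)) (min_le_left _ _))) htend'
  -- the seams
  have habsM : |M| ≤ M := by rw [abs_of_nonneg (by omega : (0:ℤ) ≤ M)]
  have habsnM : |(-M)| ≤ M := by rw [abs_neg, abs_of_nonneg (by omega : (0:ℤ) ≤ M)]
  have hL : dist (F f (-M) wm) (F f (-M) (zf q)) ≤ c := by
    calc dist (F f (-M) wm) (F f (-M) (zf q))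
        ≤ dist (F f (-M) wm) (x' (-M)) + dist (x' (-M)) (q.1 (-M))
          + dist (q.1 (-M)) (F f (-M) (zf q)) := dist_triangle4 _ _ _ _
      _ ≤ α + σ + c/4 := by
          refine add_le_add (add_le_add (hwm1 (-M) le_rfl) (hqx (-M) habsnM).le) ?_
          rw [dist_comm]
          exact hMx1 q (-M) (by rw [abs_neg, abs_of_nonneg (by omega : (0:ℤ) ≤ M)])
      _ ≤ c := by linarith
  have hR : dist (F f M (zf q)) (F f M wp) ≤ c := by
    calc dist (F f M (zf q)) (F f M wp)
        ≤ dist (F f M (zf q)) (q.1 M) + dist (q.1 M) (x' M)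
          + dist (x' M) (F f M wp) := dist_triangle4 _ _ _ _
      _ ≤ c/4 + σ + α := by
          refine add_le_add (add_le_add
            (hMx1 q M (by rw [abs_of_nonneg (by omega : (0:ℤ) ≤ M)]))
            (by rw [dist_comm]; exact (hqx M habsM).le)) ?_
          rw [dist_comm]
          exact hwp1 M le_rfl
      _ ≤ c := by linarith
  -- glue and shadow
  obtain ⟨z, hzu⟩ := glue_shadow f hc.le hshγ (zf q) wm wp M hM1 hL hR
  set u : ℤ → X :=
    fun j : ℤ => if j ≤ -M - 1 then F f j wm else if j < M then F f j (zf q) else F f j wp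
    with hudef
  have hzu1 : ∀ k : ℤ, dist (F f k z) (u k) ≤ γ := hzu.1
  have hzu2 : Tendsto (fun k : ℤ => dist (F f k z) (u k)) (cocompact ℤ) (𝓝 0) := hzu.2
  have hum : ∀ j, j ≤ -M - 1 → u j = F f j wm := by
    intro j hj; simp only [hudef, if_pos hj]
  have huz : ∀ j, -M ≤ j → j < M → u j = F f j (zf q) := by
    intro j hj1 hj2; simp only [hudef, if_neg (by omega : ¬ j ≤ -M - 1), if_pos hj2]
  have hup : ∀ j, M ≤ j → u j = F f j wp := by
    intro j hj
    simp only [hudef, if_neg (by omega : ¬ j ≤ -M - 1), if_neg (not_lt.2 hj)]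
  -- arithmetic facts
  have hpw5 : ε/2^(n+5) + ε/2^(n+5) = ε/2^(n+4) := halfpow ε (n+4)
  have hpw4 : ε/2^(n+4) + ε/2^(n+4) = ε/2^(n+3) := halfpow ε (n+3)
  have hpw3 : ε/2^(n+3) + ε/2^(n+3) = ε/2^(n+2) := halfpow ε (n+2)
  have hb1 : γ + α ≤ ε/2^(n+4) := by rw [hγdef] at hαγ ⊢; linarith
  have hb2 : γ + σ ≤ ε/2^(n+4) := by rw [hγdef] at hσγ ⊢; linarith
  have hA : ε/2^(n+3) ≤ ε/8 := by
    have hh := pw_anti hε.le (show 3 ≤ n+3 by omega)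
    norm_num at hh
    exact hh
  -- piecewise estimates
  have houter : ∀ j : ℤ, (j ≤ -M - 1 ∨ M ≤ j) → dist (F f j z) (x' j) ≤ γ + α := by
    intro j hj
    rcases hj with hj | hj
    · calc dist (F f j z) (x' j) ≤ dist (F f j z) (u j) + dist (u j) (x' j) :=
            dist_triangle _ _ _
        _ ≤ γ + α := add_le_add (hzu1 j) (by rw [hum j hj]; exact hwm1 j (by omega))
    · calc dist (F f j z) (x' j) ≤ dist (F f j z) (u j) + dist (u j) (x' j) :=
            dist_triangle _ _ _
        _ ≤ γ + α := add_le_add (hzu1 j) (by rw [hup j hj]; exact hwp1 j hj)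
  have hmid : ∀ j : ℤ, -M ≤ j → j < M →
      dist (F f j z) (x' j) ≤ γ + dist (F f j (zf q)) (q.1 j) + σ := by
    intro j h1 h2
    calc dist (F f j z) (x' j)
        ≤ dist (F f j z) (u j) + dist (u j) (q.1 j) + dist (q.1 j) (x' j) :=
          dist_triangle4 _ _ _ _
      _ ≤ γ + dist (F f j (zf q)) (q.1 j) + σ := by
          refine add_le_add (add_le_add (hzu1 j) (le_of_eq (by rw [huz j h1 h2]))) ?_
          rw [dist_comm]
          exact (hqx j (by rw [Int.abs_eq_natAbs] at *; omega)).le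
  refine ⟨z, ?_, ?_, ?_⟩
  · -- global bound
    intro j
    have hgoal : γ + α ≤ ε/4 - ε/2^(n+1+3) := by
      have : (n+1)+3 = n+4 := rfl
      rw [this]
      linarith
    rcases (by omega : j ≤ -M - 1 ∨ (-M ≤ j ∧ j < M) ∨ M ≤ j) with hj | ⟨h1, h2⟩ | hj
    · exact le_trans (houter j (Or.inl hj)) hgoal
    · refine le_trans (hmid j h1 h2) ?_
      have hzb := hz1 q j
      have : (n+1)+3 = n+4 := rfl
      rw [this]
      linarith
    · exact le_trans (houter j (Or.inr hj)) hgoal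
  · -- site bounds
    intro i hi1 hi2 j hj
    have hn4 : (n+1)+3 = n+4 := rfl
    by_cases hii : i = n+1
    · subst hii
      rw [Function.update_self] at hj
      have hjM : j ≤ -M - 1 ∨ M ≤ j := by
        have hMs : ((Mx q : ℕ):ℤ) ≤ ((t.sup Mx : ℕ):ℤ) := by
          exact_mod_cast Finset.le_sup hqt
        rw [Int.abs_eq_natAbs] at hj
        omega
      refine le_trans (houter j hjM) ?_
      rw [hn4, show (n+1)+2 = n+3 from rfl]
      linarith
    · have hin : i ≤ n := by omega
      rw [Function.update_of_ne hii] at hj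
      rcases (by omega : j ≤ -M - 1 ∨ (-M ≤ j ∧ j < M) ∨ M ≤ j) with hjc | ⟨h1, h2⟩ | hjc
      · refine le_trans (houter j (Or.inl hjc)) ?_
        have hpwi := pw_anti hε.le (show i+2 ≤ n+2 by omega)
        rw [hn4]
        linarith
      · refine le_trans (hmid j h1 h2) ?_
        have hzb := hz2 q i hi1 hin j hj
        rw [hn4]
        linarith
      · refine le_trans (houter j (Or.inr hjc)) ?_
        have hpwi := pw_anti hε.le (show i+2 ≤ n+2 by omega)
        rw [hn4]
        linarith
  · -- limit shadowing of x'
    apply tendsto_zero_of_tail (fun j => dist_nonneg)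
    intro c' hc'
    obtain ⟨N₁, hN₁⟩ := tail_of_tendsto_zero hzu2 (c'/2) (by linarith)
    obtain ⟨N₂, hN₂⟩ := tail_of_tendsto_zero_atTop hwp2 (c'/2) (by linarith)
    obtain ⟨N₃, hN₃⟩ := tail_of_tendsto_zero_atBot hwm2 (c'/2) (by linarith)
    refine ⟨N₁ + N₂.natAbs + N₃.natAbs + M.natAbs + 2, fun j hj => ?_⟩
    rw [Int.abs_eq_natAbs] at hj
    rcases (by omega : (M ≤ j ∧ N₂ ≤ j) ∨ (j ≤ -M - 1 ∧ j ≤ N₃)) with ⟨h1, h2⟩ | ⟨h1, h2⟩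
    · calc dist (F f j z) (x' j) ≤ dist (F f j z) (u j) + dist (u j) (x' j) :=
            dist_triangle _ _ _
        _ ≤ c'/2 + c'/2 := add_le_add
            (hN₁ j (by rw [Int.abs_eq_natAbs]; omega))
            (by rw [hup j h1]; exact hN₂ j h2)
        _ = c' := by ring
    · calc dist (F f j z) (x' j) ≤ dist (F f j z) (u j) + dist (u j) (x' j) :=
            dist_triangle _ _ _
        _ ≤ c'/2 + c'/2 := add_le_add
            (hN₁ j (by rw [Int.abs_eq_natAbs]; omega))
            (by rw [hum j h1]; exact hN₃ j h2)
        _ = c' := by ring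

lemma star (hε : 0 < ε) (hPc : IsCompact P) (heδ : ∀ j, e j ≤ D (ε/8)) :
    ∃ S : ℕ → ℕ, ∀ x ∈ P, ∃ z : X,
      (∀ j : ℤ, dist (F f j z) (x j) ≤ ε/4) ∧
      (∀ i : ℕ, 1 ≤ i → ∀ j : ℤ, (S i : ℤ) ≤ |j| → dist (F f j z) (x j) ≤ ε/2^(i+2)) := by
  classical
  let step : ∀ n : ℕ, {S : ℕ → ℕ // Good f P ε n S} → {S : ℕ → ℕ // Good f P ε (n+1) S} :=
    fun n p => ⟨Function.update p.1 (n+1)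
        (Classical.choose (good_step f D hD hee hPerr hε hPc n p.1 p.2)),
      Classical.choose_spec (good_step f D hD hee hPerr hε hPc n p.1 p.2)⟩
  let chain : ∀ n : ℕ, {S : ℕ → ℕ // Good f P ε n S} :=
    fun n => Nat.rec ⟨fun _ => 0, good_zero f D hD hee hPerr hε heδ _⟩ step n
  have chain_succ : ∀ n, chain (n+1) = step n (chain n) := fun n => rfl
  have coh : ∀ n i, i ≤ n → (chain n).1 i = (chain i).1 i := by
    intro n
    induction n with
    | zero =>
        intro i h
        rw [Nat.le_zero.1 h]
    | succ n ih =>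
        intro i h
        rcases Nat.eq_or_lt_of_le h with h1 | h1
        · rw [h1]
        · have hi : i ≤ n := by omega
          have hupd : (chain (n+1)).1 i = (chain n).1 i := by
            rw [chain_succ]
            exact Function.update_of_ne (by omega) _ _
          rw [hupd, ih i hi]
  set Sfin : ℕ → ℕ := fun i => (chain i).1 i with hSfin
  have GoodFin : ∀ n, Good f P ε n Sfin :=
    fun n => Good_congr f (chain n).2 (fun i hi1 hi2 => coh n i hi2)
  refine ⟨Sfin, ?_⟩
  intro x hx
  set K : ℕ → Set X := fun n => {z : X |
      (∀ j : ℤ, dist (F f j z) (x j) ≤ ε/4) ∧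
      (∀ i : ℕ, 1 ≤ i → i ≤ n → ∀ j : ℤ, (Sfin i : ℤ) ≤ |j| →
        dist (F f j z) (x j) ≤ ε/2^(i+2))} with hK
  have hKsub : ∀ n, K (n+1) ⊆ K n := by
    intro n z hz
    exact ⟨hz.1, fun i h1 h2 => hz.2 i h1 (by omega)⟩
  have hKne : ∀ n, (K n).Nonempty := by
    intro n
    obtain ⟨z, hz1, hz2, _⟩ := GoodFin n x hx
    refine ⟨z, fun j => ?_, fun i h1 h2 j hj => ?_⟩
    · have hp : 0 < ε/2^(n+3) := by positivity
      linarith [hz1 j]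
    · have hp : 0 < ε/2^(n+3) := by positivity
      linarith [hz2 i h1 h2 j hj]
  have hKcl : ∀ n, IsClosed (K n) := by
    intro n
    have e1 : K n = (⋂ j : ℤ, {z : X | dist (F f j z) (x j) ≤ ε/4}) ∩
        (⋂ i : ℕ, ⋂ (_ : 1 ≤ i), ⋂ (_ : i ≤ n), ⋂ j : ℤ, ⋂ (_ : (Sfin i : ℤ) ≤ |j|),
          {z : X | dist (F f j z) (x j) ≤ ε/2^(i+2)}) := by
      ext z
      simp only [hK, Set.mem_setOf_eq, Set.mem_inter_iff, Set.mem_iInter]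
    rw [e1]
    refine IsClosed.inter (isClosed_iInter (fun j => ?_)) (isClosed_iInter (fun i =>
      isClosed_iInter (fun _ => isClosed_iInter (fun _ => isClosed_iInter (fun j =>
        isClosed_iInter (fun _ => ?_))))))
    · exact isClosed_le (Continuous.dist (F_cont f j) continuous_const) continuous_const
    · exact isClosed_le (Continuous.dist (F_cont f j) continuous_const) continuous_const
  have hKiter := IsCompact.nonempty_iInter_of_sequence_nonempty_isCompact_isClosed K
    hKsub hKne ((hKcl 0).isCompact) hKcl
  obtain ⟨z, hz⟩ := hKiter
  simp only [Set.mem_iInter] at hz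
  refine ⟨z, (hz 0).1, fun i h1 j hj => (hz i).2 i h1 le_rfl j hj⟩
end GoodSec
end C4

section C5
open LS Filter Metric Set
variable {X : Type*} [MetricSpace X] [CompactSpace X] (f : X ≃ₜ X)

lemma hcoe_one (B : NonemptyCompacts X) : ((LS.HF f 1 B : Set X)) = f '' (B : Set X) := rfl

lemma hedist_fin (B C : NonemptyCompacts X) :
    EMetric.hausdorffEdist (B : Set X) (C : Set X) ≠ ⊤ :=
  hausdorffEdist_ne_top_of_nonempty_of_bounded B.nonempty C.nonempty
    B.isCompact.isBounded C.isCompact.isBounded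

lemma through_point (A : ℤ → NonemptyCompacts X) (k : ℤ) (a : X) (ha : a ∈ (A k : Set X)) :
    ∃ x : ℤ → X, x k = a ∧ (∀ j : ℤ, x j ∈ (A j : Set X)) ∧
      (∀ j : ℤ, dist (f (x j)) (x (j+1)) ≤ dist (LS.HF f 1 (A j)) (A (j+1))) := by
  classical
  set e' : ℤ → ℝ := fun j => dist (LS.HF f 1 (A j)) (A (j+1)) with he'
  -- forward step
  have stepFex : ∀ m : ℤ, ∀ p : X, ∃ q : X, q ∈ (A (m+1) : Set X) ∧
      (p ∈ (A m : Set X) → dist (f p) q ≤ e' m) := by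
    intro m p
    obtain ⟨q, hq1, hq2⟩ := (A (m+1)).isCompact.exists_infDist_eq_dist (A (m+1)).nonempty (f p)
    refine ⟨q, hq1, fun hp => ?_⟩
    rw [← hq2]
    have h1 : f p ∈ (LS.HF f 1 (A m) : Set X) := by
      rw [hcoe_one]; exact Set.mem_image_of_mem f hp
    have h2 := infDist_le_hausdorffDist_of_mem h1 (hedist_fin (LS.HF f 1 (A m)) (A (m+1)))
    show infDist (f p) ((A (m+1) : Set X)) ≤ dist (LS.HF f 1 (A m)) (A (m+1))
    rw [NonemptyCompacts.dist_eq]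
    exact h2
  choose fstep hfstep1 hfstep2 using stepFex
  -- backward step
  have stepBex : ∀ m : ℤ, ∀ p : X, ∃ q : X, q ∈ (A (m-1) : Set X) ∧
      (p ∈ (A m : Set X) → dist (f q) p ≤ e' (m-1)) := by
    intro m p
    have hcompact : IsCompact (f '' (A (m-1) : Set X)) :=
      (A (m-1)).isCompact.image f.continuous
    obtain ⟨y, hy1, hy2⟩ := hcompact.exists_infDist_eq_dist
      (((A (m-1)).nonempty).image f) p
    obtain ⟨q, hq1, hq2⟩ := hy1
    refine ⟨q, hq1, fun hp => ?_⟩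
    have hdy : dist (f q) p = dist p y := by rw [hq2, dist_comm]
    rw [hdy, ← hy2]
    have hpcoe : (LS.HF f 1 (A (m-1)) : Set X) = ⇑f '' (A (m-1) : Set X) := hcoe_one f _
    have h2 := infDist_le_hausdorffDist_of_mem hp
      (hedist_fin (A m) (LS.HF f 1 (A (m-1))))
    rw [hausdorffDist_comm, hpcoe] at h2
    show infDist p (⇑f '' (A (m-1) : Set X)) ≤ dist (LS.HF f 1 (A (m-1))) (A (m-1+1))
    rw [show m - 1 + 1 = m by ring, NonemptyCompacts.dist_eq, hpcoe]
    exact h2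
  choose bstep hbstep1 hbstep2 using stepBex
  -- forward and backward sequences
  let fw : ℕ → X := fun n => Nat.rec a (fun n p => fstep (k + n) p) n
  have hfw0 : fw 0 = a := rfl
  have hfwsucc : ∀ n : ℕ, fw (n+1) = fstep (k + (n:ℤ)) (fw n) := fun n => rfl
  let bw : ℕ → X := fun n => Nat.rec a (fun n p => bstep (k - n) p) n
  have hbw0 : bw 0 = a := rfl
  have hbwsucc : ∀ n : ℕ, bw (n+1) = bstep (k - (n:ℤ)) (bw n) := fun n => rfl
  have hfwmem : ∀ n : ℕ, fw n ∈ (A (k + (n:ℤ)) : Set X) := by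
    intro n
    induction n with
    | zero =>
        rw [hfw0, show k + ((0:ℕ):ℤ) = k by simp]
        exact ha
    | succ n ih =>
        rw [hfwsucc n]
        have hmem := hfstep1 (k + (n:ℤ)) (fw n)
        have harg : (k + (n:ℤ)) + 1 = k + ((n+1 : ℕ):ℤ) := by push_cast; ring
        rwa [harg] at hmem
  have hbwmem : ∀ n : ℕ, bw n ∈ (A (k - (n:ℤ)) : Set X) := by
    intro n
    induction n with
    | zero =>
        rw [hbw0, show k - ((0:ℕ):ℤ) = k by simp]
        exact ha
    | succ n ih =>
        rw [hbwsucc n]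
        have hmem := hbstep1 (k - (n:ℤ)) (bw n)
        have harg : (k - (n:ℤ)) - 1 = k - ((n+1 : ℕ):ℤ) := by push_cast; ring
        rwa [harg] at hmem
  have hfwd : ∀ n : ℕ, dist (f (fw n)) (fw (n+1)) ≤ e' (k + (n:ℤ)) := by
    intro n
    rw [hfwsucc n]
    exact hfstep2 (k + (n:ℤ)) (fw n) (hfwmem n)
  have hbwd : ∀ n : ℕ, dist (f (bw (n+1))) (bw n) ≤ e' (k - (n:ℤ) - 1) := by
    intro n
    rw [hbwsucc n]
    exact hbstep2 (k - (n:ℤ)) (bw n) (hbwmem n)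
  -- the two-sided pseudo-orbit
  set x : ℤ → X := fun j => if k ≤ j then fw (j - k).toNat else bw (k - j).toNat with hx
  have hxfw : ∀ j : ℤ, k ≤ j → x j = fw (j - k).toNat := by
    intro j hj; simp only [hx, if_pos hj]
  have hxbw : ∀ j : ℤ, j < k → x j = bw (k - j).toNat := by
    intro j hj; simp only [hx, if_neg (not_le.2 hj)]
  have hxk : x k = a := by
    rw [hxfw k le_rfl, show (k - k).toNat = 0 by omega, hfw0]
  refine ⟨x, hxk, ?_, ?_⟩
  · intro j
    rcases le_or_gt k j with hj | hj
    · rw [hxfw j hj]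
      have := hfwmem (j - k).toNat
      have harg : k + (((j - k).toNat:ℕ):ℤ) = j := by omega
      rwa [harg] at this
    · rw [hxbw j hj]
      have := hbwmem (k - j).toNat
      have harg : k - (((k - j).toNat:ℕ):ℤ) = j := by omega
      rwa [harg] at this
  · intro j
    rcases le_or_gt k j with hj | hj
    · -- forward part
      rw [hxfw j hj, hxfw (j+1) (by omega),
        show (j + 1 - k).toNat = (j - k).toNat + 1 by omega]
      have := hfwd (j - k).toNat
      have harg : k + (((j - k).toNat:ℕ):ℤ) = j := by omega
      rwa [harg] at this
    · rcases eq_or_lt_of_le (by omega : j + 1 ≤ k) with hjk | hjk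
      · -- seam at k
        rw [hxbw j hj, hxfw (j+1) (by omega)]
        rw [show (j + 1 - k).toNat = 0 by omega, hfw0,
          show (k - j).toNat = 1 by omega]
        have := hbwd 0
        rw [hbw0] at this
        have harg : k - ((0:ℕ):ℤ) - 1 = j := by omega
        rwa [harg] at this
      · -- backward part
        rw [hxbw j hj, hxbw (j+1) hjk]
        have hm : (k - j).toNat = (k - (j+1)).toNat + 1 := by omega
        rw [hm]
        have := hbwd (k - (j+1)).toNat
        have harg : k - (((k - (j+1)).toNat:ℕ):ℤ) - 1 = j := by omega
        rwa [harg] at this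
end C5

section C6
open LS Filter Metric Set

/-- if `f` has the L-shadowing property, then the induced hyperspace
map `2^f` has the L-shadowing property. -/
theorem stmt_1 {X : Type*} [MetricSpace X] [CompactSpace X] (f : X ≃ₜ X)
    (h : LS.LShadowing (LS.F f)) : LS.LShadowing (LS.HF f) := by
  classical
  have hDex : ∀ b : ℝ, 0 < b → ∃ d : ℝ, 0 < d ∧
      ∀ x, IsLimitPseudoOrbit (F f) d x → ∃ z, LimitShadows (F f) b x z := by
    intro b hb
    obtain ⟨d, hd, hsh⟩ := h b hb
    exact ⟨d, hd, hsh⟩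
  set D : ℝ → ℝ := fun b => if hb : 0 < b then (hDex b hb).choose else 1 with hDdef
  have hD : ∀ b : ℝ, 0 < b → 0 < D b ∧
      ∀ x, IsLimitPseudoOrbit (F f) (D b) x → ∃ z, LimitShadows (F f) b x z := by
    intro b hb
    have hDb : D b = (hDex b hb).choose := by rw [hDdef]; exact dif_pos hb
    rw [hDb]
    exact (hDex b hb).choose_spec
  intro ε hε
  have h8 : 0 < ε/8 := by linarith
  refine ⟨D (ε/8), (hD _ h8).1, ?_⟩
  intro A hA
  set e : ℤ → ℝ := fun j => dist (LS.HF f 1 (A j)) (A (j+1)) with hedef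
  have hee : Tendsto e (cocompact ℤ) (𝓝 0) := hA.2
  have heδ : ∀ j, e j ≤ D (ε/8) := hA.1
  set P : Set (ℤ → X) := {x | (∀ j : ℤ, x j ∈ (A j : Set X)) ∧
      (∀ j : ℤ, dist (f (x j)) (x (j+1)) ≤ e j)} with hPdef
  have hPerr : ∀ x ∈ P, ∀ j : ℤ, dist (f (x j)) (x (j+1)) ≤ e j := fun x hx => hx.2
  have hPclosed : IsClosed P := by
    have hP2 : P = (⋂ j : ℤ, {x : ℤ → X | x j ∈ (A j : Set X)}) ∩
        (⋂ j : ℤ, {x : ℤ → X | dist (f (x j)) (x (j+1)) ≤ e j}) := by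
      ext x
      simp only [hPdef, Set.mem_setOf_eq, Set.mem_inter_iff, Set.mem_iInter]
    rw [hP2]
    refine IsClosed.inter (isClosed_iInter fun j => ?_) (isClosed_iInter fun j => ?_)
    · exact IsClosed.preimage (continuous_apply j) (A j).isCompact.isClosed
    · exact isClosed_le (Continuous.dist (f.continuous.comp (continuous_apply j))
        (continuous_apply (j+1))) continuous_const
  have hPc : IsCompact P := hPclosed.isCompact
  obtain ⟨S, hstar⟩ := star f D hD hee hPerr hε hPc heδ
  -- monotone sites
  set S' : ℕ → ℕ := fun i => i + (Finset.range (i+1)).sup S with hS'def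
  have hS'mono : ∀ i i' : ℕ, i ≤ i' → S' i ≤ S' i' := by
    intro i i' hii
    simp only [hS'def]
    refine add_le_add hii (Finset.sup_mono ?_)
    intro m hm
    simp only [Finset.mem_range] at hm ⊢
    omega
  have hS'S : ∀ i, S i ≤ S' i := by
    intro i
    have hle := Finset.le_sup (f := S) (Finset.self_mem_range_succ i)
    simp only [hS'def]
    omega
  have hS'i : ∀ i, i ≤ S' i := fun i => by simp only [hS'def]; omega
  -- the envelope function
  set cnt : ℤ → ℕ := fun j => Nat.findGreatest (fun i => ((S' i : ℕ):ℤ) ≤ |j|) j.natAbs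
    with hcntdef
  set g : ℤ → ℝ := fun j => ε / 2^(cnt j + 2) with hgdef
  have hgpos : ∀ j, 0 < g j := fun j => by simp only [hgdef]; positivity
  have hgle : ∀ j, g j ≤ ε/4 := by
    intro j
    have hh := pw_anti hε.le (show 2 ≤ cnt j + 2 by omega)
    norm_num at hh
    simpa only [hgdef] using hh
  have hgbound : ∀ (z : X) (x : ℤ → X) (j : ℤ),
      (∀ j' : ℤ, dist (F f j' z) (x j') ≤ ε/4) →
      (∀ i : ℕ, 1 ≤ i → ∀ j' : ℤ, (S i : ℤ) ≤ |j'| → dist (F f j' z) (x j') ≤ ε/2^(i+2)) →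
      dist (F f j z) (x j) ≤ g j := by
    intro z x j hz1 hz2
    rcases Nat.eq_zero_or_pos (cnt j) with h0 | hpos
    · have : g j = ε/4 := by
        simp only [hgdef, h0]
        norm_num
      rw [this]
      exact hz1 j
    · obtain ⟨nw, hnw1, hnw2, hnw3⟩ :=
        (Nat.findGreatest_pos (P := fun i => ((S' i : ℕ):ℤ) ≤ |j|) (k := j.natAbs)).1 hpos
      have hspec : ((S' (cnt j) : ℕ):ℤ) ≤ |j| :=
        Nat.findGreatest_spec (P := fun i => ((S' i : ℕ):ℤ) ≤ |j|) hnw2 hnw3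
      have hSle : (S (cnt j) : ℤ) ≤ |j| :=
        le_trans (by exact_mod_cast hS'S (cnt j)) hspec
      exact hz2 (cnt j) hpos j hSle
  have hgtend : Tendsto g (cocompact ℤ) (𝓝 0) := by
    apply tendsto_zero_of_tail (fun j => (hgpos j).le)
    intro c hc
    obtain ⟨n, hn⟩ : ∃ n : ℕ, ε/2^(n+2) ≤ c := by
      obtain ⟨n, hn⟩ := pow_unbounded_of_one_lt (ε/c) (one_lt_two (α := ℝ))
      refine ⟨n, ?_⟩
      have h1 : ε/2^n ≤ c := by
        rw [div_le_iff₀ (by positivity)]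
        have h2 : ε/c < 2^n := hn
        rw [div_lt_iff₀ hc] at h2
        linarith [h2]
      exact le_trans (pw_anti hε.le (by omega : n ≤ n+2)) h1
    refine ⟨S' n + 1, fun j hj => ?_⟩
    have hcntge : n ≤ cnt j := by
      refine Nat.le_findGreatest (P := fun i => ((S' i : ℕ):ℤ) ≤ |j|) ?_ ?_
      · have := hS'i n
        rw [Int.abs_eq_natAbs] at hj
        omega
      · rw [Int.abs_eq_natAbs] at hj ⊢
        omega
    calc g j = ε/2^(cnt j + 2) := by simp only [hgdef]
      _ ≤ ε/2^(n+2) := pw_anti hε.le (by omega)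
      _ ≤ c := hn
  -- the shadowing set
  set B : Set X := {z : X | ∀ j : ℤ, infDist (F f j z) ((A j : Set X)) ≤ g j} with hBdef
  have hBclosed : IsClosed B := by
    have hB2 : B = ⋂ j : ℤ, {z : X | infDist (F f j z) ((A j : Set X)) ≤ g j} := by
      ext z; simp only [hBdef, Set.mem_setOf_eq, Set.mem_iInter]
    rw [hB2]
    exact isClosed_iInter fun j => isClosed_le
      ((continuous_infDist_pt _).comp (F_cont f j)) continuous_const
  have hBmem : ∀ (k : ℤ) (a : X), a ∈ (A k : Set X) → ∃ z ∈ B, dist (F f k z) a ≤ g k := by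
    intro k a ha
    obtain ⟨x, hxk, hxmem, hxerr⟩ := through_point f A k a ha
    have hxP : x ∈ P := ⟨hxmem, fun j => hxerr j⟩
    obtain ⟨z, hz1, hz2⟩ := hstar x hxP
    refine ⟨z, ?_, ?_⟩
    · intro j
      exact le_trans (infDist_le_dist_of_mem (hxmem j)) (hgbound z x j hz1 hz2)
    · rw [← hxk]
      exact hgbound z x k hz1 hz2
  have hBne : B.Nonempty := by
    obtain ⟨a, ha⟩ := (A 0).nonempty
    obtain ⟨z, hz, _⟩ := hBmem 0 a ha
    exact ⟨z, hz⟩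
  refine ⟨⟨⟨B, hBclosed.isCompact⟩, hBne⟩, ?_, ?_⟩
  · intro k
    have hHD : dist (LS.HF f k ⟨⟨B, hBclosed.isCompact⟩, hBne⟩) (A k) ≤ g k := by
      rw [NonemptyCompacts.dist_eq]
      have hcarrier : ((LS.HF f k (⟨⟨B, hBclosed.isCompact⟩, hBne⟩ :
          NonemptyCompacts X) : Set X)) = (F f k) '' B := rfl
      rw [hcarrier]
      apply hausdorffDist_le_of_infDist (hgpos k).le
      · rintro y ⟨z, hzB, rfl⟩
        exact hzB k
      · intro a ha
        obtain ⟨z, hzB, hza⟩ := hBmem k a ha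
        exact le_trans (infDist_le_dist_of_mem (Set.mem_image_of_mem _ hzB))
          (by rw [dist_comm]; exact hza)
    exact le_trans hHD (le_trans (hgle k) (by linarith))
  · apply squeeze_zero (fun k => dist_nonneg) (fun k => ?_) hgtend
    have hHD : dist (LS.HF f k ⟨⟨B, hBclosed.isCompact⟩, hBne⟩) (A k) ≤ g k := by
      rw [NonemptyCompacts.dist_eq]
      have hcarrier : ((LS.HF f k (⟨⟨B, hBclosed.isCompact⟩, hBne⟩ :
          NonemptyCompacts X) : Set X)) = (F f k) '' B := rfl
      rw [hcarrier]
      apply hausdorffDist_le_of_infDist (hgpos k).le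
      · rintro y ⟨z, hzB, rfl⟩
        exact hzB k
      · intro a ha
        obtain ⟨z, hzB, hza⟩ := hBmem k a ha
        exact le_trans (infDist_le_dist_of_mem (Set.mem_image_of_mem _ hzB))
          (by rw [dist_comm]; exact hza)
    exact hHD
end C6
end

section
/- If a homeomorphism f : X → X of a compact metric space has the L-shadowing property, then for each ε > 0 there is δ > 0 such that for each r > 0 there exists k_r ∈ ℕ with the property: whenever d(x,y) < δ, there is a point z ∈ V^s_ε(x) ∩ V^u_ε(y) satisfying f^{k_r}(z) ∈ V^s_r(f^{k_r}(x)) and f^{-k_r}(z) ∈ V^u_r(f^{-k_r}(y)). -/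
open Topology Filter Metric TopologicalSpace

namespace LS

variable {X : Type*} [MetricSpace X] (f : X ≃ₜ X)

lemma hpowAux_succ_apply (n : ℕ) (x : X) : hpowAux f (n+1) x = f (hpowAux f n x) := rfl

lemma hpowAux_comm (n : ℕ) (x : X) : hpowAux f n (f x) = f (hpowAux f n x) := by
  induction n with
  | zero => rfl
  | succ m ih => simp only [hpowAux_succ_apply, ih]

lemma hpowAux_symm_comm (n : ℕ) (x : X) :
    (hpowAux f n).symm (f x) = f ((hpowAux f n).symm x) := by
  apply (hpowAux f n).injective
  rw [Homeomorph.apply_symm_apply, hpowAux_comm, Homeomorph.apply_symm_apply]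

lemma F_zero (x : X) : F f 0 x = x := rfl

lemma F_one (x : X) : F f 1 x = f x := rfl

lemma F_succ (k : ℤ) (x : X) : F f (k+1) x = f (F f k x) := by
  cases k with
  | ofNat n =>
    show F f ((n : ℤ) + 1) x = _
    rw [show ((n : ℤ) + 1) = ((n+1 : ℕ) : ℤ) by push_cast; ring]
    rfl
  | negSucc n =>
    cases n with
    | zero =>
      show F f 0 x = f (F f (Int.negSucc 0) x)
      show x = f ((hpowAux f 1).symm x)
      have : (hpowAux f 1).symm x = f.symm x := by
        apply (hpowAux f 1).injective
        rw [Homeomorph.apply_symm_apply]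
        symm
        show f (hpowAux f 0 (f.symm x)) = x
        show f (f.symm x) = x
        rw [Homeomorph.apply_symm_apply]
      rw [this, Homeomorph.apply_symm_apply]
    | succ m =>
      show F f (Int.negSucc m) x = f (F f (Int.negSucc (m+1)) x)
      show (hpowAux f (m+1)).symm x = f ((hpowAux f (m+2)).symm x)
      have h1 : (hpowAux f (m+2)).symm x = (hpowAux f (m+1)).symm (f.symm x) := by
        apply (hpowAux f (m+2)).injective
        rw [Homeomorph.apply_symm_apply]
        symm
        show f (hpowAux f (m+1) ((hpowAux f (m+1)).symm (f.symm x))) = x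
        rw [Homeomorph.apply_symm_apply, Homeomorph.apply_symm_apply]
      rw [h1, ← hpowAux_symm_comm, Homeomorph.apply_symm_apply]

lemma F_pred (k : ℤ) (x : X) : F f (k-1) x = f.symm (F f k x) := by
  have := F_succ f (k-1) x
  rw [sub_add_cancel] at this
  rw [this, Homeomorph.symm_apply_apply]

lemma F_add (m n : ℤ) (x : X) : F f (m + n) x = F f m (F f n x) := by
  induction m using Int.induction_on with
  | zero => rw [zero_add]; rfl
  | succ i ih =>
    rw [show (i:ℤ) + 1 + n = (i + n) + 1 by ring, F_succ, ih, ← F_succ]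
  | pred i ih =>
    rw [show (-(i:ℤ) - 1 + n) = (-(i:ℤ) + n) - 1 by ring, F_pred, ih, ← F_pred]

lemma F_continuous (k : ℤ) : Continuous (F f k) := (hpow f k).continuous

lemma tendsto_zero_cocompact_int {g : ℤ → ℝ} (s : Set ℤ) (hs : s.Finite)
    (hg : ∀ n ∉ s, g n = 0) : Tendsto g (cocompact ℤ) (𝓝 0) := by
  refine Filter.Tendsto.congr' ?_ (tendsto_const_nhds (x := (0:ℝ)))
  have hmem : sᶜ ∈ cocompact ℤ := by
    rw [Filter.mem_cocompact]
    exact ⟨s, hs.isCompact, subset_rfl⟩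
  filter_upwards [hmem] with n hn
  exact (hg n hn).symm

end LS

/-- uniformity in the asymptotic local-product-structure. -/
theorem stmt_2 {X : Type*} [MetricSpace X] [CompactSpace X] (f : X ≃ₜ X)
    (h : LS.LShadowing (LS.F f)) :
    ∀ ε > (0:ℝ), ∃ δ > (0:ℝ), ∀ r > (0:ℝ), ∃ k : ℕ, 0 < k ∧
      ∀ x y : X, dist x y < δ →
        ∃ z, z ∈ LS.Vs f ε x ∩ LS.Vu f ε y ∧
          LS.F f k z ∈ LS.Vs f r (LS.F f k x) ∧
          LS.F f (-(k:ℤ)) z ∈ LS.Vu f r (LS.F f (-(k:ℤ)) y) := by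
  intro ε hε
  obtain ⟨δ0, hδ0, hsh⟩ := h (ε/4) (by positivity)
  refine ⟨min δ0 (ε/4) / 2, by positivity, ?_⟩
  intro r hr
  by_contra hcon
  push_neg at hcon
  choose x y hxy hfail using fun k : ℕ => hcon (k+1) k.succ_pos
  obtain ⟨⟨a, b⟩, -, φ, hφ, hconv⟩ := isCompact_univ.tendsto_subseq
      (x := fun k => (x k, y k)) (fun k => Set.mem_univ _)
  have hxa : Tendsto (fun j => x (φ j)) atTop (𝓝 a) :=
    (continuous_fst.tendsto _).comp hconv
  have hyb : Tendsto (fun j => y (φ j)) atTop (𝓝 b) :=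
    (continuous_snd.tendsto _).comp hconv
  have hab : dist a b ≤ min δ0 (ε/4) / 2 :=
    le_of_tendsto (hxa.dist hyb) (Filter.Eventually.of_forall fun j => (hxy (φ j)).le)
  have habδ0 : dist a b < δ0 := by
    have h1 : min δ0 (ε/4) ≤ δ0 := min_le_left _ _
    linarith
  have habε : dist a b ≤ ε/4 := by
    have h1 : min δ0 (ε/4) ≤ ε/4 := min_le_right _ _
    linarith
  -- first pseudo-orbit: orbit of b in the past, orbit of a in the future
  set ξ1 : ℤ → X := fun n => if 0 ≤ n then LS.F f n a else LS.F f n b with hξ1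
  have hξ1jump : ∀ n : ℤ, n ≠ -1 → LS.F f 1 (ξ1 n) = ξ1 (n+1) := by
    intro n hn
    by_cases h0 : 0 ≤ n
    · simp only [hξ1, if_pos h0, if_pos (by omega : (0:ℤ) ≤ n+1)]
      rw [LS.F_one, ← LS.F_succ]
    · simp only [hξ1, if_neg h0, if_neg (by omega : ¬ (0:ℤ) ≤ n+1)]
      rw [LS.F_one, ← LS.F_succ]
  have horbit1 : LS.IsLimitPseudoOrbit (LS.F f) δ0 ξ1 := by
    constructor
    · intro n
      by_cases hn : n = -1
      · subst hn
        have e0 : (-1:ℤ)+1 = 0 := by ring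
        rw [e0]
        simp only [hξ1]
        rw [if_neg (by norm_num : ¬ (0:ℤ) ≤ -1), if_pos (le_refl (0:ℤ))]
        rw [LS.F_one, ← LS.F_succ, e0, LS.F_zero, LS.F_zero]
        rw [dist_comm]
        exact habδ0.le
      · rw [hξ1jump n hn, dist_self]
        exact hδ0.le
    · apply LS.tendsto_zero_cocompact_int {(-1:ℤ)} (Set.finite_singleton _)
      intro n hn
      rw [hξ1jump n (by simpa using hn), dist_self]
  obtain ⟨z, hz1, hz2⟩ := hsh ξ1 horbit1
  have hzx : ∀ n : ℤ, 0 ≤ n → dist (LS.F f n z) (LS.F f n a) ≤ ε/4 := by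
    intro n hn
    have := hz1 n
    simp only [hξ1, if_pos hn] at this
    exact this
  have hzy : ∀ n : ℤ, n ≤ 0 → dist (LS.F f n z) (LS.F f n b) ≤ ε/2 := by
    intro n hn
    rcases lt_or_eq_of_le hn with h0 | h0
    · have := hz1 n
      simp only [hξ1, if_neg (by omega : ¬ (0:ℤ) ≤ n)] at this
      linarith
    · subst h0
      have h1 : dist (LS.F f 0 z) (LS.F f 0 b) ≤ dist z a + dist a b := by
        rw [LS.F_zero, LS.F_zero]
        exact dist_triangle _ _ _
      have h2 := hzx 0 le_rfl
      rw [LS.F_zero, LS.F_zero] at h2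
      linarith
  have hatTople : (atTop : Filter ℤ) ≤ cocompact ℤ := by
    rw [cocompact_eq_atBot_atTop]; exact le_sup_right
  have hatBotle : (atBot : Filter ℤ) ≤ cocompact ℤ := by
    rw [cocompact_eq_atBot_atTop]; exact le_sup_left
  have hzxT : Tendsto (fun n : ℤ => dist (LS.F f n z) (LS.F f n a)) atTop (𝓝 0) := by
    refine Filter.Tendsto.congr' ?_ (hz2.mono_left hatTople)
    filter_upwards [eventually_ge_atTop (0:ℤ)] with n hn
    simp only [hξ1, if_pos hn]
  have hzyT : Tendsto (fun n : ℤ => dist (LS.F f n z) (LS.F f n b)) atBot (𝓝 0) := by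
    refine Filter.Tendsto.congr' ?_ (hz2.mono_left hatBotle)
    filter_upwards [eventually_le_atBot (-1:ℤ)] with n hn
    simp only [hξ1, if_neg (by omega : ¬ (0:ℤ) ≤ n)]
  -- second shadowing level
  obtain ⟨δ', hδ'pos, hsh2⟩ := h (min (ε/4) r) (by positivity)
  have hηpos : (0:ℝ) < min (δ'/2) (ε/4) := by positivity
  set η : ℝ := min (δ'/2) (ε/4) with hηdef
  have hηδ' : η ≤ δ'/2 := min_le_left _ _
  have hηε : η ≤ ε/4 := min_le_right _ _
  -- choose K
  obtain ⟨N, hN⟩ := eventually_atTop.mp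
    (hzxT.eventually_lt_const (show (0:ℝ) < δ'/2 by positivity))
  obtain ⟨M, hM⟩ := eventually_atBot.mp
    (hzyT.eventually_lt_const (show (0:ℝ) < δ'/2 by positivity))
  obtain ⟨K, hKcast⟩ : ∃ K : ℕ, (K:ℤ) = ((max (N+1) (1-M)).toNat : ℤ) + 1 :=
    ⟨(max (N+1) (1-M)).toNat + 1, by push_cast; ring⟩
  have hmax1 : N+1 ≤ max (N+1) (1-M) := le_max_left _ _
  have hmax2 : 1-M ≤ max (N+1) (1-M) := le_max_right _ _
  have htn := Int.self_le_toNat (max (N+1) (1-M))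
  have hK1 : 1 ≤ (K:ℤ) := by omega
  have hKs : ∀ n : ℤ, (K:ℤ) - 1 ≤ n → dist (LS.F f n z) (LS.F f n a) ≤ δ'/2 := by
    intro n hn
    exact (hN n (by omega)).le
  have hKu : ∀ n : ℤ, n ≤ 1 - (K:ℤ) → dist (LS.F f n z) (LS.F f n b) ≤ δ'/2 := by
    intro n hn
    exact (hM n (by omega)).le
  -- choose j
  have hev : ∀ᶠ j in atTop, ∀ n ∈ Finset.Icc (-(K:ℤ)) (K:ℤ),
      dist (LS.F f n (x (φ j))) (LS.F f n a) ≤ η ∧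
      dist (LS.F f n (y (φ j))) (LS.F f n b) ≤ η := by
    rw [eventually_all_finset]
    intro n _
    have t1 : Tendsto (fun j => dist (LS.F f n (x (φ j))) (LS.F f n a)) atTop (𝓝 0) := by
      have := (((LS.F_continuous f n).tendsto a).comp hxa).dist
        (tendsto_const_nhds (x := LS.F f n a))
      simpa using this
    have t2 : Tendsto (fun j => dist (LS.F f n (y (φ j))) (LS.F f n b)) atTop (𝓝 0) := by
      have := (((LS.F_continuous f n).tendsto b).comp hyb).dist
        (tendsto_const_nhds (x := LS.F f n b))
      simpa using this
    filter_upwards [t1.eventually_lt_const hηpos, t2.eventually_lt_const hηpos] with j h1 h2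
    exact ⟨h1.le, h2.le⟩
  obtain ⟨j, hjev, hjK⟩ := (hev.and (eventually_ge_atTop K)).exists
  have hφjK : (K:ℤ) ≤ (φ j : ℤ) := by
    have := hφ.le_apply (x := j)
    exact_mod_cast hjK.trans this
  set a' := x (φ j) with ha'
  set b' := y (φ j) with hb'
  have hja : ∀ n : ℤ, -(K:ℤ) ≤ n → n ≤ K → dist (LS.F f n a') (LS.F f n a) ≤ η :=
    fun n h1 h2 => (hjev n (Finset.mem_Icc.mpr ⟨h1, h2⟩)).1
  have hjb : ∀ n : ℤ, -(K:ℤ) ≤ n → n ≤ K → dist (LS.F f n b') (LS.F f n b) ≤ η :=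
    fun n h1 h2 => (hjev n (Finset.mem_Icc.mpr ⟨h1, h2⟩)).2
  -- second pseudo-orbit
  set ξ2 : ℤ → X := fun n =>
    if (K:ℤ) ≤ n then LS.F f n a' else if n ≤ -(K:ℤ) then LS.F f n b' else LS.F f n z
    with hξ2
  have hzero : ∀ n : ℤ, n ≠ (K:ℤ)-1 → n ≠ -(K:ℤ) →
      dist (LS.F f 1 (ξ2 n)) (ξ2 (n+1)) = 0 := by
    intro n h1 h2
    by_cases hK : (K:ℤ) ≤ n
    · simp only [hξ2, if_pos hK, if_pos (by omega : (K:ℤ) ≤ n+1)]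
      rw [LS.F_one, ← LS.F_succ, dist_self]
    · by_cases hK2 : n ≤ -(K:ℤ)
      · simp only [hξ2, if_neg hK, if_pos hK2, if_neg (by omega : ¬ (K:ℤ) ≤ n+1),
          if_pos (by omega : n+1 ≤ -(K:ℤ))]
        rw [LS.F_one, ← LS.F_succ, dist_self]
      · simp only [hξ2, if_neg hK, if_neg hK2, if_neg (by omega : ¬ (K:ℤ) ≤ n+1),
          if_neg (by omega : ¬ n+1 ≤ -(K:ℤ))]
        rw [LS.F_one, ← LS.F_succ, dist_self]
  have horbit2 : LS.IsLimitPseudoOrbit (LS.F f) δ' ξ2 := by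
    constructor
    · intro n
      by_cases h1 : n = (K:ℤ)-1
      · subst h1
        have eK : (K:ℤ)-1+1 = (K:ℤ) := by ring
        rw [eK]
        simp only [hξ2]
        rw [if_neg (by omega : ¬ (K:ℤ) ≤ (K:ℤ)-1), if_neg (by omega : ¬ (K:ℤ)-1 ≤ -(K:ℤ)),
          if_pos (le_refl (K:ℤ))]
        rw [LS.F_one, ← LS.F_succ, eK]
        calc dist (LS.F f K z) (LS.F f K a')
            ≤ dist (LS.F f K z) (LS.F f K a) + dist (LS.F f K a) (LS.F f K a') :=
              dist_triangle _ _ _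
          _ ≤ δ'/2 + η := add_le_add (hKs K (by omega))
              (by rw [dist_comm]; exact hja K (by omega) le_rfl)
          _ ≤ δ' := by linarith
      · by_cases h2 : n = -(K:ℤ)
        · subst h2
          simp only [hξ2]
          rw [if_neg (by omega : ¬ (K:ℤ) ≤ -(K:ℤ)), if_pos (le_refl (-(K:ℤ))),
            if_neg (by omega : ¬ (K:ℤ) ≤ -(K:ℤ)+1), if_neg (by omega : ¬ -(K:ℤ)+1 ≤ -(K:ℤ))]
          rw [LS.F_one, ← LS.F_succ]
          calc dist (LS.F f (-(K:ℤ)+1) b') (LS.F f (-(K:ℤ)+1) z)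
              ≤ dist (LS.F f (-(K:ℤ)+1) b') (LS.F f (-(K:ℤ)+1) b)
                + dist (LS.F f (-(K:ℤ)+1) b) (LS.F f (-(K:ℤ)+1) z) := dist_triangle _ _ _
            _ ≤ η + δ'/2 := add_le_add (hjb _ (by omega) (by omega))
                (by rw [dist_comm]; exact hKu _ (by omega))
            _ ≤ δ' := by linarith
        · rw [hzero n h1 h2]
          exact hδ'pos.le
    · apply LS.tendsto_zero_cocompact_int {(K:ℤ)-1, -(K:ℤ)}
        ((Set.finite_singleton _).insert _)
      intro n hn
      simp only [Set.mem_insert_iff, Set.mem_singleton_iff, not_or] at hn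
      exact hzero n hn.1 hn.2
  obtain ⟨w, hw1, hw2⟩ := hsh2 ξ2 horbit2
  have hsε : min (ε/4) r ≤ ε/4 := min_le_left _ _
  have hsr : min (ε/4) r ≤ r := min_le_right _ _
  have hwa : ∀ n : ℤ, (K:ℤ) ≤ n → dist (LS.F f n w) (LS.F f n a') ≤ min (ε/4) r := by
    intro n hn
    have := hw1 n
    simp only [hξ2, if_pos hn] at this
    exact this
  have hwb : ∀ n : ℤ, n ≤ -(K:ℤ) → dist (LS.F f n w) (LS.F f n b') ≤ min (ε/4) r := by
    intro n hn
    have := hw1 n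
    simp only [hξ2, if_neg (by omega : ¬ (K:ℤ) ≤ n), if_pos hn] at this
    exact this
  have hwz : ∀ n : ℤ, -(K:ℤ) < n → n < (K:ℤ) → dist (LS.F f n w) (LS.F f n z) ≤ min (ε/4) r := by
    intro n h1n h2n
    have := hw1 n
    simp only [hξ2, if_neg (by omega : ¬ (K:ℤ) ≤ n), if_neg (by omega : ¬ n ≤ -(K:ℤ))] at this
    exact this
  have hWsA : Tendsto (fun n : ℤ => dist (LS.F f n w) (LS.F f n a')) atTop (𝓝 0) := by
    refine Filter.Tendsto.congr' ?_ (hw2.mono_left hatTople)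
    filter_upwards [eventually_ge_atTop (K:ℤ)] with n hn
    simp only [hξ2, if_pos hn]
  have hWuA : Tendsto (fun n : ℤ => dist (LS.F f n w) (LS.F f n b')) atBot (𝓝 0) := by
    refine Filter.Tendsto.congr' ?_ (hw2.mono_left hatBotle)
    filter_upwards [eventually_le_atBot (-(K:ℤ))] with n hn
    simp only [hξ2, if_neg (by omega : ¬ (K:ℤ) ≤ n), if_pos hn]
  have hWs : w ∈ LS.Ws f ε a' := by
    intro n hn
    by_cases hKn : (K:ℤ) ≤ n
    · have := hwa n hKn
      have h2 : min (ε/4) r ≤ ε := by linarith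
      linarith
    · calc dist (LS.F f n w) (LS.F f n a')
          ≤ dist (LS.F f n w) (LS.F f n z) + dist (LS.F f n z) (LS.F f n a)
            + dist (LS.F f n a) (LS.F f n a') := dist_triangle4 _ _ _ _
        _ ≤ min (ε/4) r + ε/4 + η := add_le_add (add_le_add
            (hwz n (by omega) (by omega)) (hzx n hn))
            (by rw [dist_comm]; exact hja n (by omega) (by omega))
        _ ≤ ε := by linarith
  have hWu : w ∈ LS.Wu f ε b' := by
    intro n hn
    by_cases hKn : n ≤ -(K:ℤ)
    · have := hwb n hKn
      have h2 : min (ε/4) r ≤ ε := by linarith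
      linarith
    · calc dist (LS.F f n w) (LS.F f n b')
          ≤ dist (LS.F f n w) (LS.F f n z) + dist (LS.F f n z) (LS.F f n b)
            + dist (LS.F f n b) (LS.F f n b') := dist_triangle4 _ _ _ _
        _ ≤ min (ε/4) r + ε/2 + η := add_le_add (add_le_add
            (hwz n (by omega) (by omega)) (hzy n hn))
            (by rw [dist_comm]; exact hjb n (by omega) (by omega))
        _ ≤ ε := by linarith
  -- the shifted memberships
  have hmK : (K:ℤ) ≤ ((φ j + 1 : ℕ) : ℤ) := by push_cast; omega
  have hVs2 : LS.F f ((φ j + 1 : ℕ) : ℤ) w ∈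
      LS.Vs f r (LS.F f ((φ j + 1 : ℕ) : ℤ) a') := by
    set m : ℤ := ((φ j + 1 : ℕ) : ℤ) with hm
    constructor
    · show Tendsto (fun n : ℤ => dist (LS.F f n (LS.F f m w)) (LS.F f n (LS.F f m a')))
        atTop (𝓝 0)
      have he : ∀ n : ℤ, dist (LS.F f n (LS.F f m w)) (LS.F f n (LS.F f m a'))
          = dist (LS.F f (n+m) w) (LS.F f (n+m) a') := fun n => by
        rw [← LS.F_add, ← LS.F_add]
      simp only [he]
      exact hWsA.comp (tendsto_atTop_add_const_right atTop m tendsto_id)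
    · intro n hn
      rw [← LS.F_add, ← LS.F_add]
      exact (hwa (n+m) (by omega)).trans (by linarith)
  have hVu2 : LS.F f (-((φ j + 1 : ℕ) : ℤ)) w ∈
      LS.Vu f r (LS.F f (-((φ j + 1 : ℕ) : ℤ)) b') := by
    set m : ℤ := ((φ j + 1 : ℕ) : ℤ) with hm
    constructor
    · show Tendsto (fun n : ℤ => dist (LS.F f n (LS.F f (-m) w)) (LS.F f n (LS.F f (-m) b')))
        atBot (𝓝 0)
      have he : ∀ n : ℤ, dist (LS.F f n (LS.F f (-m) w)) (LS.F f n (LS.F f (-m) b'))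
          = dist (LS.F f (n+(-m)) w) (LS.F f (n+(-m)) b') := fun n => by
        rw [← LS.F_add, ← LS.F_add]
      simp only [he]
      exact hWuA.comp (tendsto_atBot_add_const_right atBot (-m) tendsto_id)
    · intro n hn
      rw [← LS.F_add, ← LS.F_add]
      exact (hwb (n+(-m)) (by omega)).trans (by linarith)
  exact hfail (φ j) w ⟨⟨hWsA, hWs⟩, ⟨hWuA, hWu⟩⟩ hVs2 hVu2
end

section
/- If a homeomorphism f : X → X of a compact metric space has uniform contractions on its local stable/unstable sets, then f is asymptotically expansive. -/
open Topology Filter Metric TopologicalSpace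

section Aux
variable {X : Type*} [MetricSpace X]

lemma hpowAux_toEquiv (f : X ≃ₜ X) (n : ℕ) :
    (LS.hpowAux f n).toEquiv = (f.toEquiv : Equiv.Perm X) ^ n := by
  induction n with
  | zero => rfl
  | succ n ih =>
    show ((LS.hpowAux f n).trans f).toEquiv = _
    have : ((LS.hpowAux f n).trans f).toEquiv = (LS.hpowAux f n).toEquiv.trans f.toEquiv := rfl
    rw [this, ih, pow_succ']
    rfl

lemma hpow_toEquiv (f : X ≃ₜ X) (k : ℤ) :
    (LS.hpow f k).toEquiv = (f.toEquiv : Equiv.Perm X) ^ k := by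
  cases k with
  | ofNat n =>
    show (LS.hpowAux f n).toEquiv = _
    rw [hpowAux_toEquiv, ← zpow_natCast]
    rfl
  | negSucc n =>
    show (LS.hpowAux f (n+1)).symm.toEquiv = _
    rw [zpow_negSucc]
    have : (LS.hpowAux f (n+1)).symm.toEquiv = ((LS.hpowAux f (n+1)).toEquiv).symm := rfl
    rw [this, hpowAux_toEquiv]
    rfl

lemma F_apply' (f : X ≃ₜ X) (k : ℤ) (y : X) :
    LS.F f k y = ((f.toEquiv : Equiv.Perm X) ^ k) y := by
  show (LS.hpow f k) y = _
  rw [show ⇑(LS.hpow f k) = ⇑(LS.hpow f k).toEquiv from rfl, hpow_toEquiv]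

lemma F_F (f : X ≃ₜ X) (a b : ℤ) (y : X) :
    LS.F f a (LS.F f b y) = LS.F f (a + b) y := by
  rw [F_apply', F_apply', F_apply', zpow_add, Equiv.Perm.mul_apply]

lemma F_zero_s7 (f : X ≃ₜ X) (y : X) : LS.F f 0 y = y := by
  rw [F_apply', zpow_zero, Equiv.Perm.one_apply]

end Aux

/-- uniform contractions on local stable/unstable sets imply asymptotic
expansiveness. -/
theorem stmt_7 {X : Type*} [MetricSpace X] [CompactSpace X] (f : X ≃ₜ X)
    (huc : ∃ ε > (0:ℝ), ∀ r > (0:ℝ), ∃ k : ℕ, ∀ x : X, ∀ n : ℕ, k ≤ n →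
      (LS.F f n '' LS.Ws f ε x ⊆ LS.Ws f r (LS.F f n x)) ∧
      (LS.F f (-(n:ℤ)) '' LS.Wu f ε x ⊆ LS.Wu f r (LS.F f (-(n:ℤ)) x))) :
    ∃ ε > (0:ℝ), ∀ x : X, LS.Vs f ε x ∩ LS.Vu f ε x = {x} := by
  obtain ⟨ε, hε, H⟩ := huc
  refine ⟨ε, hε, fun x => ?_⟩
  ext y
  simp only [Set.mem_inter_iff, Set.mem_singleton_iff, LS.Vs, LS.Vu]
  constructor
  · rintro ⟨⟨-, hs⟩, -, hu⟩
    have key : ∀ r : ℝ, 0 < r → dist y x ≤ r := by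
      intro r hr
      have hr'0 : 0 < min r ε := lt_min hr hε
      obtain ⟨k, hk⟩ := H (min r ε) hr'0
      have hmem : LS.F f (k:ℤ) y ∈ LS.Wu f ε (LS.F f (k:ℤ) x) := by
        intro j hj
        rw [F_F, F_F]
        rcases le_or_gt 0 (j + k) with h | h
        · exact hs _ h
        · exact hu _ h.le
      have h2 := (hk (LS.F f (k:ℤ) x) k le_rfl).2 ⟨_, hmem, rfl⟩
      have h3 := h2 0 le_rfl
      rw [F_F, F_F, F_F, F_F] at h3
      simp only [zero_add, neg_add_cancel, F_zero_s7] at h3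
      exact h3.trans (min_le_left _ _)
    have h0 : dist y x ≤ 0 :=
      le_of_forall_pos_le_add (fun r hr => by simpa using key r hr)
    exact eq_of_dist_eq_zero (le_antisymm h0 dist_nonneg)
  · rintro rfl
    refine ⟨⟨?_, fun j _ => by simpa [dist_self] using hε.le⟩,
            ⟨?_, fun j _ => by simpa [dist_self] using hε.le⟩⟩ <;>
      · simp only [LS.WsA, LS.WuA, Set.mem_setOf_eq, dist_self]
        exact tendsto_const_nhds
end
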